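/- Let r ≥ 1, b ∈ ℝ, and let (p_n)_{n∈ℤ} be a nonnegative doubly infinite sequence. Then (1/2)·∑_{n∈ℤ} min{p_{n-1}, p_n} ≤ 2^{r-2} · ∑_{n∈ℤ} |b + n|^r · p_n. -/

import Mathlib

open ENNReal

theorem stmt_4 (r : ℝ) (hr : 1 ≤ r) (b : ℝ) (p : ℤ → ℝ) (hp : ∀ n, 0 ≤ p n) :
    ENNReal.ofReal (1 / 2) * ∑' n : ℤ, ENNReal.ofReal (min (p (n - 1)) (p n)) ≤
      ENNReal.ofReal ((2 : ℝ) ^ (r - 2)) *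
        ∑' n : ℤ, ENNReal.ofReal (|b + (n : ℝ)| ^ r * p n) := by
  have hr0 : (0:ℝ) ≤ r := by linarith
  set N : ℤ := ⌈-b⌉ with hNdef
  have hx0 : 0 ≤ b + (N:ℝ) := by
    have := Int.le_ceil (-b); simp only [hNdef] at *; linarith
  have hx1 : b + (N:ℝ) < 1 := by
    have := Int.ceil_lt_add_one (-b); simp only [hNdef] at *; linarith
  set f : ℤ → ℝ≥0∞ := fun n => ENNReal.ofReal (min (p (n - 1)) (p n)) with hf
  set g : ℤ → ℝ≥0∞ := fun k => ENNReal.ofReal (|b + (k : ℝ)| ^ r * p k) with hg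
  -- vertices far from N have |b+k| ≥ 1
  have hbig : ∀ k : ℤ, (k ≤ N - 2 ∨ N + 1 ≤ k) → (1:ℝ) ≤ |b + (k:ℝ)| := by
    intro k hk
    rcases hk with hk | hk
    · have h1 : (k:ℝ) ≤ (N:ℝ) - 2 := by
        have := (Int.cast_le (R := ℝ)).mpr hk; push_cast at this; linarith
      have : b + (k:ℝ) ≤ -1 := by linarith
      rw [abs_of_nonpos (by linarith)]; linarith
    · have h1 : (N:ℝ) + 1 ≤ (k:ℝ) := by
        have := (Int.cast_le (R := ℝ)).mpr hk; push_cast at this; linarith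
      have : 1 ≤ b + (k:ℝ) := by linarith
      rw [abs_of_nonneg (by linarith)]; linarith
  have hbigr : ∀ k : ℤ, (k ≤ N - 2 ∨ N + 1 ≤ k) → (1:ℝ) ≤ |b + (k:ℝ)| ^ r := by
    intro k hk
    calc (1:ℝ) = 1 ^ r := (Real.one_rpow r).symm
    _ ≤ |b + (k:ℝ)| ^ r := Real.rpow_le_rpow (by norm_num) (hbig k hk) hr0
  -- min ≤ g k for far vertices
  have hminle : ∀ n k : ℤ, (k = n - 1 ∨ k = n) → (k ≤ N - 2 ∨ N + 1 ≤ k) → f n ≤ g k := by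
    intro n k hk hfar
    apply ENNReal.ofReal_le_ofReal
    have h1 : min (p (n-1)) (p n) ≤ p k := by
      rcases hk with rfl | rfl
      · exact min_le_left _ _
      · exact min_le_right _ _
    calc min (p (n-1)) (p n) ≤ p k := h1
    _ = 1 * p k := (one_mul _).symm
    _ ≤ |b + (k:ℝ)| ^ r * p k := mul_le_mul_of_nonneg_right (hbigr k hfar) (hp k)
  -- the special edge
  have h2r1 : (1:ℝ) ≤ 2 ^ (r-1) := by
    calc (1:ℝ) = 2 ^ (0:ℝ) := (Real.rpow_zero 2).symm
    _ ≤ 2 ^ (r-1) := Real.rpow_le_rpow_of_exponent_le (by norm_num) (by linarith)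
  have hmid : f N ≤ ENNReal.ofReal ((2:ℝ) ^ (r-1)) * (g (N-1) + g N) := by
    set x := b + (N:ℝ) with hxdef
    have hxN1 : b + ((N - 1 : ℤ) : ℝ) = x - 1 := by push_cast; ring
    have key : (1:ℝ) ≤ 2 ^ (r-1) * ((1-x) ^ r + x ^ r) := by
      have h := NNReal.rpow_add_le_mul_rpow_add_rpow (Real.toNNReal (1-x)) (Real.toNNReal x) hr
      have hsum : Real.toNNReal (1-x) + Real.toNNReal x = 1 := by
        rw [← Real.toNNReal_add (by linarith) hx0]
        norm_num
      rw [hsum, NNReal.one_rpow] at h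
      have := NNReal.coe_le_coe.mpr h
      push_cast [NNReal.coe_rpow, Real.coe_toNNReal _ (by linarith : (0:ℝ) ≤ 1 - x),
        Real.coe_toNNReal _ hx0] at this
      linarith
    have hreal : min (p (N-1)) (p N) ≤
        2 ^ (r-1) * (|b + ((N-1:ℤ):ℝ)| ^ r * p (N-1) + |b + (N:ℝ)| ^ r * p N) := by
      rw [hxN1, abs_of_nonpos (by linarith), abs_of_nonneg hx0]
      have hm1 : min (p (N-1)) (p N) ≤ p (N-1) := min_le_left _ _
      have hm2 : min (p (N-1)) (p N) ≤ p N := min_le_right _ _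
      have hmnn : 0 ≤ min (p (N-1)) (p N) := le_min (hp _) (hp _)
      have h1 : (1-x)^r * min (p (N-1)) (p N) ≤ (1-x)^r * p (N-1) :=
        mul_le_mul_of_nonneg_left hm1 (Real.rpow_nonneg (by linarith) r)
      have h2 : x^r * min (p (N-1)) (p N) ≤ x^r * p N :=
        mul_le_mul_of_nonneg_left hm2 (Real.rpow_nonneg hx0 r)
      have h3 : min (p (N-1)) (p N) ≤ 2^(r-1) * ((1-x)^r + x^r) * min (p (N-1)) (p N) := by
        nlinarith
      have h4 : (0:ℝ) ≤ 2^(r-1) := by linarith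
      have : -(x-1) = 1 - x := by ring
      rw [this]
      nlinarith
    calc f N ≤ ENNReal.ofReal (2 ^ (r-1) * (|b + ((N-1:ℤ):ℝ)| ^ r * p (N-1) + |b + (N:ℝ)| ^ r * p N)) :=
          ENNReal.ofReal_le_ofReal hreal
    _ = ENNReal.ofReal ((2:ℝ) ^ (r-1)) * (g (N-1) + g N) := by
        rw [ENNReal.ofReal_mul (by linarith), ENNReal.ofReal_add
          (mul_nonneg (Real.rpow_nonneg (abs_nonneg _) r) (hp _))
          (mul_nonneg (Real.rpow_nonneg (abs_nonneg _) r) (hp _))]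
  -- injective reindexing for the other edges
  set G : ℤ → ℝ≥0∞ := fun k => if k = N - 1 then 0 else if k = N then 0 else g k with hG
  have hinj : (∑' n : ℤ, if n = N then 0 else f n) ≤ ∑' k, G k := by
    set e : ℤ → ℤ := fun n => if n ≤ N then n - 1 else n with he
    have heinj : Function.Injective e := by
      intro a c h
      simp only [he] at h
      split_ifs at h <;> omega
    calc (∑' n : ℤ, if n = N then 0 else f n) ≤ ∑' n : ℤ, G (e n) := by
          apply ENNReal.tsum_le_tsum
          intro n
          by_cases hn : n = N
          · simp [hn]
          rw [if_neg hn]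
          by_cases hle : n ≤ N
          · have hlt : n ≤ N - 1 := by omega
            have hen : e n = n - 1 := by simp [he, hle]
            rw [hen, hG]
            simp only
            rw [if_neg (by omega), if_neg (by omega)]
            exact hminle n (n-1) (Or.inl rfl) (Or.inl (by omega))
          · have hen : e n = n := by simp [he, hle]
            rw [hen, hG]
            simp only
            rw [if_neg (by omega), if_neg (by omega)]
            exact hminle n n (Or.inr rfl) (Or.inr (by omega))
    _ ≤ ∑' k, G k := ENNReal.tsum_comp_le_tsum_of_injective heinj G
  have hite : ∀ (c : ℤ) (h : ℤ → ℝ≥0∞), ∑' k, h k = h c + ∑' k, if k = c then 0 else h k := by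
    intro c h
    rw [ENNReal.tsum_eq_add_tsum_ite c]
    congr 1
    apply tsum_congr
    intro k
    by_cases hkc : k = c <;> simp [hkc]
  -- decompose ∑ g
  have hgdecomp : ∑' k, g k = g (N-1) + g N + ∑' k, G k := by
    rw [hite (N-1) g]
    have : (∑' k : ℤ, if k = N - 1 then 0 else g k)
        = g N + ∑' k, G k := by
      rw [hite N (fun k => if k = N - 1 then 0 else g k), if_neg (by omega)]
      congr 1
      apply tsum_congr
      intro k
      simp only [hG]
      by_cases h1 : k = N <;> by_cases h2 : k = N - 1 <;> simp [h1, h2]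
    rw [this]; ring
  -- main estimate
  have hone : (1:ℝ≥0∞) ≤ ENNReal.ofReal ((2:ℝ) ^ (r-1)) := by
    rw [ENNReal.one_le_ofReal]; exact h2r1
  have hmain : ∑' n, f n ≤ ENNReal.ofReal ((2:ℝ) ^ (r-1)) * ∑' k, g k := by
    calc ∑' n, f n = f N + ∑' n : ℤ, if n = N then 0 else f n := hite N f
    _ ≤ ENNReal.ofReal ((2:ℝ) ^ (r-1)) * (g (N-1) + g N) + ∑' k, G k :=
          add_le_add hmid hinj
    _ ≤ ENNReal.ofReal ((2:ℝ) ^ (r-1)) * (g (N-1) + g N)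
          + ENNReal.ofReal ((2:ℝ) ^ (r-1)) * ∑' k, G k := by
          gcongr
          exact le_mul_of_one_le_left zero_le hone
    _ = ENNReal.ofReal ((2:ℝ) ^ (r-1)) * (g (N-1) + g N + ∑' k, G k) := by ring
    _ = ENNReal.ofReal ((2:ℝ) ^ (r-1)) * ∑' k, g k := by rw [hgdecomp]
  -- finish
  have hhalf : ENNReal.ofReal (1/2 : ℝ) * ENNReal.ofReal ((2:ℝ) ^ (r-1))
      = ENNReal.ofReal ((2:ℝ) ^ (r-2)) := by
    rw [← ENNReal.ofReal_mul (by norm_num)]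
    congr 1
    have : (2:ℝ) ^ (r-1) = 2 * 2 ^ (r-2) := by
      rw [show r - 1 = 1 + (r-2) by ring, Real.rpow_add (by norm_num), Real.rpow_one]
    rw [this]; ring
  calc ENNReal.ofReal (1/2 : ℝ) * ∑' n, f n
      ≤ ENNReal.ofReal (1/2 : ℝ) * (ENNReal.ofReal ((2:ℝ) ^ (r-1)) * ∑' k, g k) := by
        gcongr
  _ = ENNReal.ofReal ((2:ℝ) ^ (r-2)) * ∑' k, g k := by rw [← mul_assoc, hhalf]
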